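/- Sup-norm bound for the regularized value function (first claim of Lemma 5.3, general-measure form): The unique bounded measurable fixed point V_h of T* satisfies sup_{x ∈ 𝒳} |V_h(x)| ≤ ( h · sup_{x,u} |r(x,u)| + λh · |ln μ(𝒰)| ) / (1 − γ); in particular, if μ(𝒰) = 1 then ‖V_h‖_∞ ≤ h‖r‖_∞/(1 − γ). -/

import Mathlib

open MeasureTheory

/-- The discrete-time entropy-regularized Bellman operator
`(T*W)(x) = λh · ln ∫ exp((r(x,u)h + γ ∫ W dκ(x,u)) / (λh)) μ(du)`. -/
noncomputable def Tstar {𝒳 𝒰 : Type*} [MeasurableSpace 𝒳] [MeasurableSpace 𝒰]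
    (μ : Measure 𝒰) (κ : ProbabilityTheory.Kernel (𝒳 × 𝒰) 𝒳) (r : 𝒳 × 𝒰 → ℝ)
    (h lam γ : ℝ) (W : 𝒳 → ℝ) : 𝒳 → ℝ :=
  fun x => lam * h *
    Real.log (∫ u, Real.exp ((r (x, u) * h + γ * ∫ y, W y ∂(κ (x, u))) / (lam * h)) ∂μ)

/-- **Sup-norm bound for the regularized value function** (first claim of
Lemma 5.3, general-measure form): the unique bounded measurable fixed point `V_h`
of `T*` satisfies `‖V_h‖_∞ ≤ (h‖r‖_∞ + λh·|ln μ(𝒰)|)/(1 − γ)`; in particular, if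
`μ(𝒰) = 1` then `‖V_h‖_∞ ≤ h‖r‖_∞/(1 − γ)`. -/
theorem Vh_sup_norm_bound
    {𝒳 𝒰 : Type*} [MeasurableSpace 𝒳] [MeasurableSpace 𝒰]
    (μ : Measure 𝒰) [IsFiniteMeasure μ] (hμpos : 0 < μ Set.univ)
    (κ : ProbabilityTheory.Kernel (𝒳 × 𝒰) 𝒳) [ProbabilityTheory.IsMarkovKernel κ]
    (r : 𝒳 × 𝒰 → ℝ) (hrmeas : Measurable r)
    (R : ℝ) (hrbdd : ∀ p, |r p| ≤ R)
    (h lam γ : ℝ) (hh : 0 < h) (hlam : 0 < lam) (hγ : γ ∈ Set.Ioo (0 : ℝ) 1)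
    (V : 𝒳 → ℝ) (hVmeas : Measurable V) (hVbdd : ∃ C : ℝ, ∀ x, |V x| ≤ C)
    (hVfix : Tstar μ κ r h lam γ V = V) :
    (∀ x, |V x| ≤ (h * R + lam * h * |Real.log (μ Set.univ).toReal|) / (1 - γ)) ∧
    (μ Set.univ = 1 → ∀ x, |V x| ≤ h * R / (1 - γ)) := by
  obtain ⟨C, hC⟩ := hVbdd
  obtain ⟨hγ0, hγ1⟩ := hγ
  set m : ℝ := (μ Set.univ).toReal with hm
  have hmpos : 0 < m := ENNReal.toReal_pos hμpos.ne' (measure_ne_top μ _)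
  set A : ℝ := h * R + lam * h * |Real.log m| with hA
  set S : ℝ := sSup (Set.range fun x => |V x|) with hS
  have hbdd : BddAbove (Set.range fun x => |V x|) := ⟨C, by rintro y ⟨z, rfl⟩; exact hC z⟩
  have hlh : 0 < lam * h := mul_pos hlam hh
  -- key estimate
  have key : ∀ x : 𝒳, |V x| ≤ A + γ * S := by
    intro x
    have hVS : ∀ y, |V y| ≤ S := fun y => le_csSup hbdd ⟨y, rfl⟩
    have hS0 : 0 ≤ S := le_trans (abs_nonneg _) (hVS x)
    have h𝒰 : Nonempty 𝒰 := by
      by_contra h'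
      rw [not_nonempty_iff] at h'
      have he : (Set.univ : Set 𝒰) = ∅ := Set.eq_empty_of_isEmpty _
      rw [he, measure_empty] at hμpos
      exact lt_irrefl _ hμpos
    have hR0 : 0 ≤ R := (abs_nonneg _).trans (hrbdd (x, Classical.arbitrary 𝒰))
    set B : ℝ := (h * R + γ * S) / (lam * h) with hB
    set f : 𝒰 → ℝ := fun u => (r (x, u) * h + γ * ∫ y, V y ∂(κ (x, u))) / (lam * h) with hf
    have hfB : ∀ u, |f u| ≤ B := by
      intro u
      rw [hf, hB, abs_div, abs_of_pos hlh]
      gcongr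
      calc |r (x, u) * h + γ * ∫ y, V y ∂(κ (x, u))|
            ≤ |r (x, u) * h| + |γ * ∫ y, V y ∂(κ (x, u))| := abs_add_le _ _
          _ ≤ h * R + γ * S := by
              gcongr ?_ + ?_
              · rw [abs_mul, abs_of_pos hh, mul_comm]
                gcongr
                exact hrbdd _
              · rw [abs_mul, abs_of_pos hγ0]
                gcongr
                calc |∫ y, V y ∂(κ (x, u))| ≤ S * ((κ (x,u)) Set.univ).toReal := by
                      rw [← Real.norm_eq_abs]
                      exact norm_integral_le_of_norm_le_const
                        (Filter.Eventually.of_forall fun y => (Real.norm_eq_abs (V y)).le.trans (hVS y))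
                  _ = S := by simp
    -- measurability of f
    have hgmeas : StronglyMeasurable fun a : 𝒳 × 𝒰 => ∫ y, V y ∂(κ a) := by
      have : StronglyMeasurable (Function.uncurry fun (_ : 𝒳 × 𝒰) (y : 𝒳) => V y) :=
        (hVmeas.comp measurable_snd).stronglyMeasurable
      exact this.integral_kernel_prod_right
    have hfm : Measurable f := by
      apply Measurable.div_const
      exact ((hrmeas.comp measurable_prodMk_left).mul_const h).add
        ((hgmeas.measurable.comp measurable_prodMk_left).const_mul γ)
    have hfmeas : AEStronglyMeasurable (fun u => Real.exp (f u)) μ :=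
      (Real.measurable_exp.comp hfm).aestronglyMeasurable
    have hint : Integrable (fun u => Real.exp (f u)) μ := by
      refine ⟨hfmeas, ?_⟩
      apply HasFiniteIntegral.mono' (g := fun _ : 𝒰 => Real.exp B)
        (hasFiniteIntegral_const _)
      refine Filter.Eventually.of_forall fun u => ?_
      rw [Real.norm_eq_abs, abs_of_pos (Real.exp_pos _)]
      exact Real.exp_le_exp.2 ((le_abs_self _).trans (hfB u))
    set I : ℝ := ∫ u, Real.exp (f u) ∂μ with hI
    have hupper : I ≤ Real.exp B * m := by
      rw [hI, hm]
      calc ∫ u, Real.exp (f u) ∂μ ≤ ∫ _, Real.exp B ∂μ := by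
            apply integral_mono hint (integrable_const _)
            intro u; exact Real.exp_le_exp.2 ((le_abs_self _).trans (hfB u))
        _ = Real.exp B * (μ Set.univ).toReal := by
            rw [integral_const, smul_eq_mul, mul_comm, measureReal_def]
    have hlower : Real.exp (-B) * m ≤ I := by
      rw [hI, hm]
      calc Real.exp (-B) * (μ Set.univ).toReal = ∫ _, Real.exp (-B) ∂μ := by
            rw [integral_const, smul_eq_mul, mul_comm, measureReal_def]
        _ ≤ ∫ u, Real.exp (f u) ∂μ := by
            apply integral_mono (integrable_const _) hint
            intro u
            refine Real.exp_le_exp.2 ?_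
            have h1 := hfB u
            have h2 := neg_abs_le (f u)
            linarith
    have hIpos : 0 < I := lt_of_lt_of_le (by positivity) hlower
    have hlogu : Real.log I ≤ B + Real.log m := by
      have := Real.log_le_log hIpos hupper
      rwa [Real.log_mul (Real.exp_pos B).ne' hmpos.ne', Real.log_exp] at this
    have hlogl : -B + Real.log m ≤ Real.log I := by
      have := Real.log_le_log (by positivity) hlower
      rwa [Real.log_mul (Real.exp_pos (-B)).ne' hmpos.ne', Real.log_exp] at this
    have hlogabs : |Real.log I| ≤ B + |Real.log m| := by
      rw [abs_le]
      constructor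
      · have : -(B + |Real.log m|) ≤ -B + Real.log m := by
          have := neg_abs_le (Real.log m); linarith
        linarith
      · have : Real.log m ≤ |Real.log m| := le_abs_self _
        linarith
    have hVx : V x = lam * h * Real.log I := by
      conv_lhs => rw [← hVfix]
      rfl
    rw [hVx, abs_mul, abs_of_pos hlh]
    calc lam * h * |Real.log I| ≤ lam * h * (B + |Real.log m|) := by gcongr
      _ = A + γ * S := by
          rw [hB, hA]; field_simp; ring
  constructor
  · intro x
    have hne : (Set.range fun x => |V x|).Nonempty := ⟨|V x|, x, rfl⟩
    have hSle : S ≤ A + γ * S := csSup_le hne (by rintro y ⟨z, rfl⟩; exact key z)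
    have h1γ : 0 < 1 - γ := by linarith
    have hSfin : S ≤ A / (1 - γ) := by
      rw [le_div_iff₀ h1γ]; linarith
    exact le_trans (le_csSup hbdd ⟨x, rfl⟩) hSfin
  · intro hμ1 x
    have : m = 1 := by rw [hm, hμ1]; simp
    have hA' : A = h * R := by rw [hA, this]; simp
    have := (fun x => ?_ : ∀ x, |V x| ≤ A / (1-γ)) x
    · rwa [hA'] at this
    · have hne : (Set.range fun x => |V x|).Nonempty := ⟨|V x|, x, rfl⟩
      have hSle : S ≤ A + γ * S := csSup_le hne (by rintro y ⟨z, rfl⟩; exact key z)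
      have h1γ : 0 < 1 - γ := by linarith
      have hSfin : S ≤ A / (1 - γ) := by rw [le_div_iff₀ h1γ]; linarith
      exact le_trans (le_csSup hbdd ⟨x, rfl⟩) hSfin
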